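/- Let n ≥ 2 and let λ ∈ ℝⁿ with λ ∈ Γ₂. Define μ ∈ ℝⁿ by μ_i = λ_i − (σ₂(λ)/σ₁(λ))/(n−1) for every i. Then σ₁(μ) ≥ (1/2)·σ₁(λ) > 0. -/

import Mathlib

/-- The `k`-th elementary symmetric polynomial `σ_k` of `λ ∈ ℝⁿ`. -/
noncomputable def sigma (n k : ℕ) (lam : Fin n → ℝ) : ℝ :=
  ∑ s ∈ Finset.univ.powersetCard k, ∏ i ∈ s, lam i

/-- Gårding's cone `Γ_k`: all `σ_l`, `1 ≤ l ≤ k`, are positive. -/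
def InGamma (n k : ℕ) (lam : Fin n → ℝ) : Prop :=
  ∀ l : ℕ, 1 ≤ l → l ≤ k → 0 < sigma n l lam


lemma esymm_one_eq {α : Type*} [DecidableEq α] (t : Finset α) (f : α → ℝ) :
    ∑ s ∈ t.powersetCard 1, ∏ i ∈ s, f i = ∑ i ∈ t, f i := by
  rw [Finset.powersetCard_one, Finset.sum_map]
  simp

lemma esymm_two_eq {α : Type*} [DecidableEq α] (t : Finset α) (f : α → ℝ) :
    2 * ∑ s ∈ t.powersetCard 2, ∏ i ∈ s, f i
      = (∑ i ∈ t, f i) ^ 2 - ∑ i ∈ t, (f i) ^ 2 := by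
  induction t using Finset.induction with
  | empty => rw [Finset.powersetCard_eq_empty.mpr (by simp)]; simp
  | insert a t ha ih =>
    rw [Finset.powersetCard_succ_insert ha, Finset.sum_union, Finset.sum_image,
      Finset.sum_insert ha, Finset.sum_insert ha]
    · have h1 : ∑ s ∈ t.powersetCard 1, f a * ∏ i ∈ s, f i
          = f a * ∑ i ∈ t, f i := by
        rw [← Finset.mul_sum, esymm_one_eq]
      have h2 : ∀ s ∈ t.powersetCard 1, ∏ i ∈ insert a s, f i
          = f a * ∏ i ∈ s, f i := by
        intro s hs
        rw [Finset.mem_powersetCard] at hs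
        exact Finset.prod_insert (fun h => ha (hs.1 h))
      rw [Finset.sum_congr rfl h2, h1]
      ring_nf
      linarith [ih]
    · intro s hs u hu h
      rw [Finset.mem_coe, Finset.mem_powersetCard] at hs hu
      have : s = (insert a s).erase a := by
        rw [Finset.erase_insert (fun h => ha (hs.1 h))]
      rw [this, h, Finset.erase_insert (fun h => ha (hu.1 h))]
    · rw [Finset.disjoint_left]
      intro s hs hs'
      rw [Finset.mem_powersetCard] at hs
      obtain ⟨u, hu, rfl⟩ := Finset.mem_image.mp hs'
      rw [Finset.mem_powersetCard] at hu
      exact ha (hs.1 (Finset.mem_insert_self a u))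

theorem stmt_1 (n : ℕ) (hn : 2 ≤ n) (lam : Fin n → ℝ) (hlam : InGamma n 2 lam)
    (mu : Fin n → ℝ)
    (hmu : ∀ i, mu i = lam i - (sigma n 2 lam / sigma n 1 lam) / ((n : ℝ) - 1)) :
    (1 / 2) * sigma n 1 lam ≤ sigma n 1 mu ∧ 0 < (1 / 2) * sigma n 1 lam := by
  have h1 : 0 < sigma n 1 lam := hlam 1 le_rfl (by norm_num)
  have h2 : 0 < sigma n 2 lam := hlam 2 one_le_two le_rfl
  have hncast : (2 : ℝ) ≤ (n : ℝ) := by exact_mod_cast hn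
  have hn1 : (0 : ℝ) < (n : ℝ) - 1 := by linarith
  have hS1 : sigma n 1 lam = ∑ i, lam i := esymm_one_eq _ _
  have hS2 : 2 * sigma n 2 lam = (∑ i, lam i) ^ 2 - ∑ i, (lam i) ^ 2 :=
    esymm_two_eq _ _
  have hC : (∑ i, lam i) ^ 2 ≤ (n : ℝ) * ∑ i, (lam i) ^ 2 := by
    have := sq_sum_le_card_mul_sum_sq (s := (Finset.univ : Finset (Fin n)))
      (f := lam)
    simpa using this
  have hkey : 2 * (n : ℝ) * sigma n 2 lam ≤ ((n : ℝ) - 1) * (sigma n 1 lam) ^ 2 := by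
    rw [hS1]
    nlinarith [hS2, hC]
  set c : ℝ := (sigma n 2 lam / sigma n 1 lam) / ((n : ℝ) - 1) with hc
  have hmuS : sigma n 1 mu = sigma n 1 lam - (n : ℝ) * c := by
    rw [show sigma n 1 mu = ∑ i, mu i from esymm_one_eq _ _, hS1]
    simp [hmu, Finset.sum_sub_distrib, Finset.card_univ, mul_comm]
  have hcle : (n : ℝ) * c ≤ sigma n 1 lam / 2 := by
    rw [hc, div_div, mul_div_assoc']
    rw [div_le_div_iff₀ (by positivity) two_pos]
    nlinarith [hkey]
  constructor
  · rw [hmuS]; linarith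
  · linarith
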